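/- Let H be a real Hilbert space, s ∈ H, α > 0, and M̃ a collection of finite-dimensional subspaces of H containing the zero subspace. Suppose there exists C̃ > 0 such that for every integer M ≥ 1, inf { ‖P_m s − s‖² : m ∈ M̃, D_m ≤ M } ≤ C̃ · M^{−2α}. Then there exists a constant C₁ > 0 (depending only on C̃ and α) such that for every T > 0: inf_{m ∈ M̃} ( ‖P_m s − s‖² + T² · D_m ) ≤ C₁ · (T²)^{2α/(1+2α)}. -/

import Mathlib

/-- if the best `M`-dimensional approximation error of `s` by models of the
collection decays like `M ^ (-2α)`, then the penalized approximation error with penalty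
`T² · D_m` decays like `(T²) ^ (2α/(1+2α))`. -/
theorem stmt_16 {H : Type*} [NormedAddCommGroup H] [InnerProductSpace ℝ H]
    {ι : Type*} (m : ι → Submodule ℝ H)
    [∀ i, FiniteDimensional ℝ (m i)] (i₀ : ι) (hi₀ : m i₀ = ⊥)
    (s : H) (α : ℝ) (hα : 0 < α)
    (Ct : ℝ) (hCt : 0 < Ct)
    (happrox : ∀ M : ℕ, 1 ≤ M →
      sInf {x : ℝ | ∃ i : ι, Module.finrank ℝ (m i) ≤ M ∧
          x = ‖(Submodule.orthogonalProjectionOnto (m i) s : H) - s‖ ^ 2} ≤ Ct * (M : ℝ) ^ (-(2 * α))) :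
    ∃ C₁ : ℝ, 0 < C₁ ∧ ∀ T : ℝ, 0 < T →
      sInf {x : ℝ | ∃ i : ι,
          x = ‖(Submodule.orthogonalProjectionOnto (m i) s : H) - s‖ ^ 2 +
            T ^ 2 * (Module.finrank ℝ (m i) : ℝ)} ≤
        C₁ * (T ^ 2) ^ (2 * α / (1 + 2 * α)) := by
  classical
  refine ⟨Ct + 2 + ‖s‖ ^ 2, by positivity, fun T hT => ?_⟩
  set e : ℝ := 2 * α / (1 + 2 * α) with he
  have hT2 : (0:ℝ) < T ^ 2 := by positivity
  have hEpos : 0 < (T ^ 2) ^ e := Real.rpow_pos_of_pos hT2 e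
  have he0 : 0 ≤ e := by
    rw [he]
    positivity
  have he1 : e ≤ 1 := by
    rw [he, div_le_one (by linarith)]
    linarith
  have hproj0 : (Submodule.orthogonalProjectionOnto (m i₀) s : H) = 0 := by
    exact (Submodule.eq_bot_iff _).mp hi₀ _ (Submodule.orthogonalProjectionOnto (m i₀) s).2
  have hrank0 : Module.finrank ℝ (m i₀) = 0 := by
    rw [hi₀]
    exact finrank_bot ℝ H
  have hPbdd : BddBelow {x : ℝ | ∃ i : ι,
      x = ‖(Submodule.orthogonalProjectionOnto (m i) s : H) - s‖ ^ 2 +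
        T ^ 2 * (Module.finrank ℝ (m i) : ℝ)} := by
    refine ⟨0, fun x hx => ?_⟩
    obtain ⟨i, rfl⟩ := hx
    positivity
  rcases le_or_gt (T ^ 2) 1 with hT1 | hT1
  · -- main case : T² ≤ 1
    set β : ℝ := (1 + 2 * α)⁻¹ with hβ
    have hx0 : 0 < (T ^ 2) ^ (-β) := Real.rpow_pos_of_pos hT2 _
    set M : ℕ := ⌈(T ^ 2) ^ (-β)⌉₊ with hMdef
    have hM1 : 1 ≤ M := Nat.one_le_ceil_iff.mpr hx0
    have hMle : (T ^ 2) ^ (-β) ≤ (M : ℝ) := Nat.le_ceil _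
    have hMlt : (M : ℝ) < (T ^ 2) ^ (-β) + 1 := Nat.ceil_lt_add_one hx0.le
    have hSne : {x : ℝ | ∃ i : ι, Module.finrank ℝ (m i) ≤ M ∧
        x = ‖(Submodule.orthogonalProjectionOnto (m i) s : H) - s‖ ^ 2}.Nonempty := by
      refine ⟨‖(Submodule.orthogonalProjectionOnto (m i₀) s : H) - s‖ ^ 2, i₀, ?_, rfl⟩
      rw [hrank0]
      exact Nat.zero_le _
    -- key comparison between the two infima
    have key : sInf {x : ℝ | ∃ i : ι,
        x = ‖(Submodule.orthogonalProjectionOnto (m i) s : H) - s‖ ^ 2 +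
          T ^ 2 * (Module.finrank ℝ (m i) : ℝ)} ≤
        sInf {x : ℝ | ∃ i : ι, Module.finrank ℝ (m i) ≤ M ∧
          x = ‖(Submodule.orthogonalProjectionOnto (m i) s : H) - s‖ ^ 2} + T ^ 2 * (M : ℝ) := by
      rw [← sub_le_iff_le_add]
      apply le_csInf hSne
      rintro x ⟨i, hiM, rfl⟩
      rw [sub_le_iff_le_add]
      have h1 : sInf {x : ℝ | ∃ i : ι,
          x = ‖(Submodule.orthogonalProjectionOnto (m i) s : H) - s‖ ^ 2 +
            T ^ 2 * (Module.finrank ℝ (m i) : ℝ)} ≤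
          ‖(Submodule.orthogonalProjectionOnto (m i) s : H) - s‖ ^ 2 +
            T ^ 2 * (Module.finrank ℝ (m i) : ℝ) :=
        csInf_le hPbdd ⟨i, rfl⟩
      have h2 : (Module.finrank ℝ (m i) : ℝ) ≤ (M : ℝ) := by exact_mod_cast hiM
      nlinarith [hT2.le]
    have hbound1 : Ct * (M : ℝ) ^ (-(2 * α)) ≤ Ct * (T ^ 2) ^ e := by
      have h1 : (M : ℝ) ^ (-(2 * α)) ≤ ((T ^ 2) ^ (-β)) ^ (-(2 * α)) :=
        Real.rpow_le_rpow_of_nonpos hx0 hMle (by linarith)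
      have h2 : ((T ^ 2) ^ (-β)) ^ (-(2 * α)) = (T ^ 2) ^ e := by
        rw [← Real.rpow_mul hT2.le]
        congr 1
        rw [he, hβ]
        field_simp
      rw [← h2]
      exact mul_le_mul_of_nonneg_left h1 hCt.le
    have heβ : e = 1 + -β := by
      rw [he, hβ]
      field_simp
      ring
    have hA : (T ^ 2) ^ e = T ^ 2 * (T ^ 2) ^ (-β) := by
      rw [heβ, Real.rpow_add hT2, Real.rpow_one]
    have hB : T ^ 2 ≤ (T ^ 2) ^ e := by
      calc T ^ 2 = (T ^ 2) ^ (1 : ℝ) := (Real.rpow_one _).symm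
        _ ≤ (T ^ 2) ^ e := Real.rpow_le_rpow_of_exponent_ge hT2 hT1 he1
    have hbound2 : T ^ 2 * (M : ℝ) ≤ 2 * (T ^ 2) ^ e := by
      nlinarith [hT2.le]
    have hS := happrox M hM1
    nlinarith [sq_nonneg ‖s‖, hEpos.le]
  · -- easy case : 1 < T²
    have hmem : ‖s‖ ^ 2 ∈ {x : ℝ | ∃ i : ι,
        x = ‖(Submodule.orthogonalProjectionOnto (m i) s : H) - s‖ ^ 2 +
          T ^ 2 * (Module.finrank ℝ (m i) : ℝ)} := by
      refine ⟨i₀, ?_⟩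
      rw [hproj0, hrank0]
      simp
    have h1 : sInf {x : ℝ | ∃ i : ι,
        x = ‖(Submodule.orthogonalProjectionOnto (m i) s : H) - s‖ ^ 2 +
          T ^ 2 * (Module.finrank ℝ (m i) : ℝ)} ≤ ‖s‖ ^ 2 := csInf_le hPbdd hmem
    have hE1 : 1 ≤ (T ^ 2) ^ e := Real.one_le_rpow hT1.le he0
    nlinarith [norm_nonneg s, sq_nonneg (‖s‖)]
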